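/- Let ℓ: ℝ^p → ℝ be convex and differentiable, a ∈ (0,1), λ > 0, and let β̂ be a minimizer over ℝ^p of β ↦ ℓ(β) + λ Σ_{k=1}^r ‖W_k β_k‖. Assume that |W^{-1} ∇ℓ(β°)|_∞ ≤ aλ and that the cone invertibility factor satisfies ζ_{a,W} > 0. Then |β̂ − β°|_∞ ≤ (1 + a) λ / ζ_{a,W}. -/

import Mathlib

open scoped BigOperators Classical
open Filter Topology

/-- The group norm `‖W_k β_k‖`. -/
noncomputable def groupNorm {r : ℕ} {p : Fin r → ℕ}
    (w β : ((k : Fin r) × Fin (p k)) → ℝ) (k : Fin r) : ℝ :=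
  Real.sqrt (∑ j : Fin (p k), (w ⟨k, j⟩ * β ⟨k, j⟩) ^ 2)

/-- The sup norm `|v|_∞`. -/
noncomputable def supNorm {ι : Type*} [Fintype ι] (v : ι → ℝ) : ℝ := ⨆ c, |v c|

/-- Coordinate `c` of the gradient `∇ℓ(β)`. -/
noncomputable def gradCoord {r : ℕ} {p : Fin r → ℕ}
    (ℓ : (((k : Fin r) × Fin (p k)) → ℝ) → ℝ)
    (β : ((k : Fin r) × Fin (p k)) → ℝ) (c : (k : Fin r) × Fin (p k)) : ℝ :=
  fderiv ℝ ℓ β (Pi.single c 1)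

/-- Membership in the cone `C_{a,W}` where `S = {k : βo_k ≠ 0}`. -/
def InCone {r : ℕ} {p : Fin r → ℕ}
    (βo w : ((k : Fin r) × Fin (p k)) → ℝ) (a : ℝ)
    (v : ((k : Fin r) × Fin (p k)) → ℝ) : Prop :=
  ∑ k : Fin r, (if ∀ j : Fin (p k), βo ⟨k, j⟩ = 0 then groupNorm w v k else 0)
    ≤ ∑ k : Fin r, (if ∀ j : Fin (p k), βo ⟨k, j⟩ = 0 then 0 else groupNorm w v k)
      + a * ∑ c, |w c * v c|

/-- The Cone Invertibility Factor
`ζ_{a,W} = inf_{0 ≠ ν ∈ C_{a,W}} |W⁻¹(∇ℓ(β°+ν) − ∇ℓ(β°))|_∞ / |ν|_∞`. -/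
noncomputable def cif {r : ℕ} {p : Fin r → ℕ}
    (ℓ : (((k : Fin r) × Fin (p k)) → ℝ) → ℝ)
    (βo w : ((k : Fin r) × Fin (p k)) → ℝ) (a : ℝ) : ℝ :=
  sInf {z : ℝ | ∃ ν : ((k : Fin r) × Fin (p k)) → ℝ, ν ≠ 0 ∧ InCone βo w a ν ∧
    z = supNorm (fun c => (gradCoord ℓ (βo + ν) c - gradCoord ℓ βo c) / w c) / supNorm ν}

/- ### Auxiliary lemmas -/

section Aux

lemma GL_convex_grad_ineq {E : Type*} [NormedAddCommGroup E] [NormedSpace ℝ E]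
    (f : E → ℝ) (hc : ConvexOn ℝ Set.univ f) (hd : Differentiable ℝ f) (x y : E) :
    f x + fderiv ℝ f x (y - x) ≤ f y := by
  have hline : ∀ t : ℝ, x + t • (y - x) = AffineMap.lineMap x y t := by
    intro t; simp [AffineMap.lineMap_apply]; abel
  set g : ℝ → ℝ := fun t => f (x + t • (y - x)) with hg
  have hgc : ConvexOn ℝ Set.univ g := by
    have := hc.comp_affineMap (AffineMap.lineMap x y : ℝ →ᵃ[ℝ] E)
    have heq : g = f ∘ AffineMap.lineMap x y := by
      funext t; show f (x + t • (y - x)) = f (AffineMap.lineMap x y t); rw [hline]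
    rw [heq]; exact this.subset (by simp) convex_univ
  have hder : HasDerivAt g (fderiv ℝ f x (y - x)) 0 := by
    have h1 : HasDerivAt (fun t : ℝ => x + t • (y - x)) (y - x) 0 := by
      simpa using ((hasDerivAt_id (0:ℝ)).smul_const (y - x)).const_add x
    have h2 := (hd (x + (0:ℝ) • (y - x))).hasFDerivAt.comp_hasDerivAt 0 h1
    simpa [Function.comp_def, hg] using h2
  have := hgc.le_slope_of_hasDerivAt (Set.mem_univ 0) (Set.mem_univ 1) one_pos hder
  rw [slope_def_field] at this
  simp only [hg] at this
  have h0 : x + (0:ℝ) • (y - x) = x := by simp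
  have h1 : x + (1:ℝ) • (y - x) = y := by simp
  rw [h0, h1] at this
  linarith [this]

lemma GL_deriv_lowerbound {E : Type*} [NormedAddCommGroup E] [NormedSpace ℝ E]
    (f : E → ℝ) (hd : Differentiable ℝ f) (x e : E) (K : ℝ)
    (h : ∀ t : ℝ, 0 < t → -K * t ≤ f (x + t • e) - f x) :
    -K ≤ fderiv ℝ f x e := by
  set g : ℝ → ℝ := fun t => f (x + t • e) with hg
  have hder : HasDerivAt g (fderiv ℝ f x e) 0 := by
    have h1 : HasDerivAt (fun t : ℝ => x + t • e) e 0 := by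
      simpa using ((hasDerivAt_id (0:ℝ)).smul_const e).const_add x
    have h2 := (hd (x + (0:ℝ) • e)).hasFDerivAt.comp_hasDerivAt 0 h1
    simpa [Function.comp_def, hg] using h2
  have htend : Tendsto (slope g 0) (𝓝[>] (0:ℝ)) (𝓝 (fderiv ℝ f x e)) :=
    (hasDerivAt_iff_tendsto_slope.mp hder).mono_left
      (nhdsWithin_mono _ (fun t ht => ne_of_gt ht))
  refine ge_of_tendsto htend ?_
  filter_upwards [self_mem_nhdsWithin] with t ht
  have ht' : (0:ℝ) < t := ht
  rw [slope_def_field]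
  have := h t ht'
  rw [le_div_iff₀ (by linarith : (0:ℝ) < t - 0)]
  simp only [hg]
  have h0 : x + (0:ℝ) • e = x := by simp
  rw [h0]
  nlinarith [this]

variable {r : ℕ} {p : Fin r → ℕ}

lemma GL_groupNorm_eq_norm (w β : ((k : Fin r) × Fin (p k)) → ℝ) (k : Fin r) :
    groupNorm w β k
      = ‖(WithLp.equiv 2 (Fin (p k) → ℝ)).symm (fun j => w ⟨k, j⟩ * β ⟨k, j⟩)‖ := by
  rw [EuclideanSpace.norm_eq, groupNorm]
  congr 1; apply Finset.sum_congr rfl; intro j _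
  rw [Real.norm_eq_abs, sq_abs]; rfl

lemma GL_groupNorm_nonneg (w β : ((k : Fin r) × Fin (p k)) → ℝ) (k : Fin r) :
    0 ≤ groupNorm w β k := Real.sqrt_nonneg _

lemma GL_groupNorm_add_le (w x y : ((k : Fin r) × Fin (p k)) → ℝ) (k : Fin r) :
    groupNorm w (x + y) k ≤ groupNorm w x k + groupNorm w y k := by
  rw [GL_groupNorm_eq_norm, GL_groupNorm_eq_norm, GL_groupNorm_eq_norm]
  have : ((WithLp.equiv 2 (Fin (p k) → ℝ)).symm (fun j => w ⟨k, j⟩ * (x + y) ⟨k, j⟩))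
      = (WithLp.equiv 2 (Fin (p k) → ℝ)).symm (fun j => w ⟨k, j⟩ * x ⟨k, j⟩)
        + (WithLp.equiv 2 (Fin (p k) → ℝ)).symm (fun j => w ⟨k, j⟩ * y ⟨k, j⟩) := by
    ext j; simp [Pi.add_apply, mul_add]
  rw [this]; exact norm_add_le _ _

lemma GL_groupNorm_congr (w x y : ((k : Fin r) × Fin (p k)) → ℝ) (k : Fin r)
    (h : ∀ j : Fin (p k), (x ⟨k, j⟩) ^ 2 = (y ⟨k, j⟩) ^ 2) :
    groupNorm w x k = groupNorm w y k := by
  unfold groupNorm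
  congr 1; apply Finset.sum_congr rfl; intro j _
  rw [mul_pow, mul_pow, h j]

lemma GL_sum_groupNorm_single (w : ((k : Fin r) × Fin (p k)) → ℝ)
    (c : (k : Fin r) × Fin (p k)) (t : ℝ) :
    ∑ k : Fin r, groupNorm w (Pi.single c t) k = |w c * t| := by
  rw [Finset.sum_eq_single c.1]
  · unfold groupNorm
    rw [Finset.sum_eq_single c.2]
    · rw [show (⟨c.1, c.2⟩ : (k : Fin r) × Fin (p k)) = c from rfl,
        Pi.single_eq_same, Real.sqrt_sq_eq_abs]
    · intro j _ hj
      have hne : (⟨c.1, j⟩ : (k : Fin r) × Fin (p k)) ≠ c := by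
        intro h; apply hj
        exact eq_of_heq (Sigma.mk.inj_iff.mp h).2
      rw [Pi.single_eq_of_ne hne]; ring
    · intro h; exact absurd (Finset.mem_univ _) h
  · intro k _ hk
    unfold groupNorm
    have : ∀ j : Fin (p k),
        (w ⟨k, j⟩ * (Pi.single c t : ((k : Fin r) × Fin (p k)) → ℝ) ⟨k, j⟩) ^ 2 = 0 := by
      intro j
      have hne : (⟨k, j⟩ : (k : Fin r) × Fin (p k)) ≠ c := by
        intro h; exact hk (congrArg Sigma.fst h)
      rw [Pi.single_eq_of_ne hne]; ring
    simp [this]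
  · intro h; exact absurd (Finset.mem_univ _) h

lemma GL_clm_apply_eq_sum (L : (((k : Fin r) × Fin (p k)) → ℝ) →L[ℝ] ℝ)
    (ν : ((k : Fin r) × Fin (p k)) → ℝ) :
    L ν = ∑ c : (k : Fin r) × Fin (p k), ν c * L (Pi.single c 1) := by
  have hν : ν = ∑ c : (k : Fin r) × Fin (p k), Pi.single c (ν c) := by
    rw [Finset.univ_sum_single]
  conv_lhs => rw [hν]
  rw [map_sum]
  apply Finset.sum_congr rfl; intro c _
  have : (Pi.single c (ν c) : ((k : Fin r) × Fin (p k)) → ℝ)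
      = (ν c) • (Pi.single c (1:ℝ) : ((k : Fin r) × Fin (p k)) → ℝ) := by
    ext d; by_cases hd : d = c
    · subst hd; simp
    · simp [Pi.single_eq_of_ne hd]
  rw [this, map_smul]; simp [mul_comm]

lemma GL_le_supNorm {ι : Type*} [Fintype ι] (v : ι → ℝ) (c : ι) : |v c| ≤ supNorm v :=
  le_ciSup (Set.Finite.bddAbove (Set.finite_range fun c => |v c|)) c

lemma GL_supNorm_nonneg {ι : Type*} [Fintype ι] [Nonempty ι] (v : ι → ℝ) : 0 ≤ supNorm v :=
  le_trans (abs_nonneg _) (GL_le_supNorm v (Classical.arbitrary ι))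

lemma GL_supNorm_le {ι : Type*} [Fintype ι] [Nonempty ι] {v : ι → ℝ} {M : ℝ}
    (h : ∀ c, |v c| ≤ M) : supNorm v ≤ M := ciSup_le h

lemma GL_supNorm_pos {ι : Type*} [Fintype ι] {v : ι → ℝ} (h : v ≠ 0) : 0 < supNorm v := by
  obtain ⟨c, hc⟩ : ∃ c, v c ≠ 0 := by
    by_contra h'; push_neg at h'; exact h (funext h')
  exact lt_of_lt_of_le (abs_pos.mpr hc) (GL_le_supNorm v c)

end Aux

set_option maxHeartbeats 1000000

/-- `ℓ_∞` estimation error bound for the Group Lasso: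
if `|W⁻¹ ∇ℓ(β°)|_∞ ≤ aλ` and `ζ_{a,W} > 0`, then `|β̂ − β°|_∞ ≤ (1+a) λ / ζ_{a,W}`. -/
theorem groupLasso_linf_bound {r : ℕ} {p : Fin r → ℕ}
    (ℓ : (((k : Fin r) × Fin (p k)) → ℝ) → ℝ)
    (hconv : ConvexOn ℝ Set.univ ℓ) (hdiff : Differentiable ℝ ℓ)
    (w : ((k : Fin r) × Fin (p k)) → ℝ) (hw : ∀ c, 0 < w c)
    (a : ℝ) (ha : a ∈ Set.Ioo (0 : ℝ) 1)
    (lam : ℝ) (hlam : 0 < lam)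
    (βhat βo : ((k : Fin r) × Fin (p k)) → ℝ)
    (hmin : ∀ β : ((k : Fin r) × Fin (p k)) → ℝ,
      ℓ βhat + lam * ∑ k : Fin r, groupNorm w βhat k
        ≤ ℓ β + lam * ∑ k : Fin r, groupNorm w β k)
    (hgrad : (⨆ c : (k : Fin r) × Fin (p k), |gradCoord ℓ βo c / w c|) ≤ a * lam)
    (hζ : 0 < cif ℓ βo w a) :
    supNorm (fun c => βhat c - βo c) ≤ (1 + a) * lam / cif ℓ βo w a := by
  obtain ⟨ha0, ha1⟩ := ha
  by_cases hne : Nonempty ((k : Fin r) × Fin (p k))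
  swap
  · exfalso
    have hempty : {z : ℝ | ∃ ν : ((k : Fin r) × Fin (p k)) → ℝ, ν ≠ 0 ∧ InCone βo w a ν ∧
        z = supNorm (fun c => (gradCoord ℓ (βo + ν) c - gradCoord ℓ βo c) / w c) / supNorm ν}
        = ∅ := by
      rw [Set.eq_empty_iff_forall_notMem]
      rintro z ⟨ν, hν, -, -⟩
      exact hν (funext fun c => absurd ⟨c⟩ hne)
    rw [cif, hempty, Real.sInf_empty] at hζ
    exact lt_irrefl 0 hζ
  haveI := hne
  set ν : ((k : Fin r) × Fin (p k)) → ℝ := fun c => βhat c - βo c with hνdef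
  by_cases hν0 : ν = 0
  · rw [hν0]
    have h0 : supNorm (0 : ((k : Fin r) × Fin (p k)) → ℝ) = 0 := by
      unfold supNorm; simp
    rw [h0]
    exact div_nonneg (mul_nonneg (by linarith) hlam.le) hζ.le
  -- pointwise gradient bound at βo
  have hgo : ∀ c, |gradCoord ℓ βo c| ≤ a * lam * w c := by
    intro c
    have h1 : |gradCoord ℓ βo c / w c| ≤ a * lam :=
      le_trans (le_ciSup (Set.Finite.bddAbove
        (Set.finite_range fun c => |gradCoord ℓ βo c / w c|)) c) hgrad
    rw [abs_div, abs_of_pos (hw c), div_le_iff₀ (hw c)] at h1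
    linarith
  -- penalty perturbation bound
  have hpen : ∀ (x : ((k : Fin r) × Fin (p k)) → ℝ) (c : (k : Fin r) × Fin (p k)) (t : ℝ),
      ∑ k : Fin r, groupNorm w (x + Pi.single c t) k
        ≤ (∑ k : Fin r, groupNorm w x k) + |w c * t| := by
    intro x c t
    calc ∑ k : Fin r, groupNorm w (x + Pi.single c t) k
        ≤ ∑ k : Fin r, (groupNorm w x k + groupNorm w (Pi.single c t) k) :=
          by
            apply Finset.sum_le_sum
            intro k _
            exact GL_groupNorm_add_le w x (Pi.single c t) k
      _ = (∑ k : Fin r, groupNorm w x k) + ∑ k : Fin r, groupNorm w (Pi.single c t) k := by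
          rw [Finset.sum_add_distrib]
      _ = (∑ k : Fin r, groupNorm w x k) + |w c * t| := by
          rw [GL_sum_groupNorm_single]
  -- KKT: gradient bound at βhat
  have hKKT : ∀ c, |gradCoord ℓ βhat c| ≤ lam * w c := by
    intro c
    have key : ∀ s : ℝ, -(lam * w c * |s|) ≤ fderiv ℝ ℓ βhat (Pi.single c s) := by
      intro s
      have hlow : ∀ t : ℝ, 0 < t → -(lam * w c * |s|) * t
          ≤ ℓ (βhat + t • (Pi.single c s : ((k : Fin r) × Fin (p k)) → ℝ)) - ℓ βhat := by
        intro t ht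
        have hts : (t • (Pi.single c s : ((k : Fin r) × Fin (p k)) → ℝ))
            = Pi.single c (t * s) := by
          ext d; by_cases hd : d = c
          · subst hd; simp
          · simp [Pi.single_eq_of_ne hd]
        rw [hts]
        have h2 := hmin (βhat + Pi.single c (t * s))
        have h3 := hpen βhat c (t * s)
        have habs : |w c * (t * s)| = w c * (t * |s|) := by
          rw [abs_mul, abs_of_pos (hw c), abs_mul, abs_of_pos ht]
        nlinarith [h2, h3]
      exact GL_deriv_lowerbound ℓ hdiff βhat (Pi.single c s) (lam * w c * |s|) hlow
    have hpos := key 1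
    have hneg := key (-1)
    have hsingle_neg : (Pi.single c (-1:ℝ) : ((k : Fin r) × Fin (p k)) → ℝ)
        = -(Pi.single c 1) := by
      ext d; by_cases hd : d = c
      · subst hd; simp
      · simp [Pi.single_eq_of_ne hd]
    rw [hsingle_neg, map_neg] at hneg
    simp only [abs_neg, abs_one, mul_one] at hpos hneg
    rw [abs_le]
    constructor
    · exact hpos
    · rw [gradCoord]; linarith
  -- cone membership of ν
  have hβν : βo + ν = βhat := by funext c; simp [hνdef]
  have hcone : InCone βo w a ν := by
    have h1 : ℓ βo + fderiv ℝ ℓ βo (βhat - βo) ≤ ℓ βhat :=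
      GL_convex_grad_ineq ℓ hconv hdiff βo βhat
    have hsub : (βhat - βo : ((k : Fin r) × Fin (p k)) → ℝ) = ν := rfl
    rw [hsub] at h1
    have h2 : fderiv ℝ ℓ βo ν = ∑ c, ν c * gradCoord ℓ βo c :=
      GL_clm_apply_eq_sum (fderiv ℝ ℓ βo) ν
    have h3 : -(a * lam * ∑ c, |w c * ν c|) ≤ ∑ c, ν c * gradCoord ℓ βo c := by
      rw [Finset.mul_sum, ← Finset.sum_neg_distrib]
      apply Finset.sum_le_sum
      intro c _
      have := hgo c
      have h4 : |ν c * gradCoord ℓ βo c| ≤ a * lam * |w c * ν c| := by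
        rw [abs_mul, abs_mul, abs_of_pos (hw c)]
        calc |ν c| * |gradCoord ℓ βo c| ≤ |ν c| * (a * lam * w c) :=
              mul_le_mul_of_nonneg_left this (abs_nonneg _)
          _ = a * lam * (w c * |ν c|) := by ring
      nlinarith [neg_abs_le (ν c * gradCoord ℓ βo c)]
    have h4 := hmin βo
    -- per-group comparison
    have h5 : ∀ k : Fin r, groupNorm w βo k - groupNorm w βhat k
        ≤ (if ∀ j : Fin (p k), βo ⟨k, j⟩ = 0 then 0 else groupNorm w ν k)
          - (if ∀ j : Fin (p k), βo ⟨k, j⟩ = 0 then groupNorm w ν k else 0) := by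
      intro k
      by_cases hk : ∀ j : Fin (p k), βo ⟨k, j⟩ = 0
      · rw [if_pos hk, if_pos hk]
        have hβo0 : groupNorm w βo k = 0 := by
          unfold groupNorm
          have : ∀ j : Fin (p k), (w ⟨k, j⟩ * βo ⟨k, j⟩) ^ 2 = 0 := by
            intro j; rw [hk j]; ring
          simp [this]
        have hβν' : groupNorm w βhat k = groupNorm w ν k := by
          apply GL_groupNorm_congr
          intro j
          simp [hνdef, hk j]
        rw [hβo0, hβν']
      · rw [if_neg hk, if_neg hk]
        have htri : groupNorm w βo k ≤ groupNorm w βhat k + groupNorm w (βo - βhat) k := by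
          have : βo = βhat + (βo - βhat) := by abel
          calc groupNorm w βo k = groupNorm w (βhat + (βo - βhat)) k := by rw [← this]
            _ ≤ _ := GL_groupNorm_add_le w βhat (βo - βhat) k
        have hνeq : groupNorm w (βo - βhat) k = groupNorm w ν k := by
          apply GL_groupNorm_congr
          intro j
          have : (βo - βhat : ((k : Fin r) × Fin (p k)) → ℝ) ⟨k, j⟩ = -(ν ⟨k, j⟩) := by
            simp [hνdef]
          rw [this]; ring
        rw [hνeq] at htri
        linarith
    have h6 : ∑ k : Fin r, (groupNorm w βo k - groupNorm w βhat k)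
        ≤ (∑ k : Fin r, (if ∀ j : Fin (p k), βo ⟨k, j⟩ = 0 then 0 else groupNorm w ν k))
          - ∑ k : Fin r, (if ∀ j : Fin (p k), βo ⟨k, j⟩ = 0 then groupNorm w ν k else 0) := by
      rw [← Finset.sum_sub_distrib]
      exact Finset.sum_le_sum fun k _ => h5 k
    rw [Finset.sum_sub_distrib] at h6
    unfold InCone
    have hml : lam * (∑ k : Fin r, groupNorm w βo k - ∑ k : Fin r, groupNorm w βhat k)
        ≥ -(a * lam * ∑ c, |w c * ν c|) := by
      have := h4
      nlinarith [h1, h2 ▸ h3]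
    nlinarith [h6, hml, hlam]
  -- conclude via the CIF
  have hsν := GL_supNorm_pos hν0
  have hmem : supNorm (fun c => (gradCoord ℓ (βo + ν) c - gradCoord ℓ βo c) / w c) / supNorm ν
      ∈ {z : ℝ | ∃ ν' : ((k : Fin r) × Fin (p k)) → ℝ, ν' ≠ 0 ∧ InCone βo w a ν' ∧
        z = supNorm (fun c => (gradCoord ℓ (βo + ν') c - gradCoord ℓ βo c) / w c) / supNorm ν'} :=
    ⟨ν, hν0, hcone, rfl⟩
  have hbdd : BddBelow {z : ℝ | ∃ ν' : ((k : Fin r) × Fin (p k)) → ℝ, ν' ≠ 0 ∧ InCone βo w a ν' ∧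
      z = supNorm (fun c => (gradCoord ℓ (βo + ν') c - gradCoord ℓ βo c) / w c) / supNorm ν'} := by
    refine ⟨0, ?_⟩
    rintro z ⟨ν', hν', -, rfl⟩
    exact div_nonneg (GL_supNorm_nonneg _) (GL_supNorm_nonneg _)
  have hle : cif ℓ βo w a
      ≤ supNorm (fun c => (gradCoord ℓ (βo + ν) c - gradCoord ℓ βo c) / w c) / supNorm ν :=
    csInf_le hbdd hmem
  rw [hβν] at hle
  have hsupg : supNorm (fun c => (gradCoord ℓ βhat c - gradCoord ℓ βo c) / w c)
      ≤ (1 + a) * lam := by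
    apply GL_supNorm_le
    intro c
    rw [abs_div, abs_of_pos (hw c), div_le_iff₀ (hw c)]
    have := abs_sub (gradCoord ℓ βhat c) (gradCoord ℓ βo c)
    have h1 := hKKT c
    have h2 := hgo c
    calc |gradCoord ℓ βhat c - gradCoord ℓ βo c|
        ≤ |gradCoord ℓ βhat c| + |gradCoord ℓ βo c| := abs_sub _ _
      _ ≤ lam * w c + a * lam * w c := add_le_add h1 h2
      _ = (1 + a) * lam * w c := by ring
  have hfin : cif ℓ βo w a * supNorm ν ≤ (1 + a) * lam := by
    have := (le_div_iff₀ hsν).mp hle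
    linarith [hsupg]
  rw [le_div_iff₀ hζ]
  nlinarith [hfin]
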